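/- Let Θ be a finite set with ⊤ ∉ Θ and let π be a path expression over Γ. There exists a CFM over P and the alphabet Σ × (Θ × (Θ ∪ {⊤})) whose language is exactly the set of extended MSCs (M, ξ), with ξ(e) = (ξ₁(e), ξ₂(e)) ∈ Θ × (Θ ∪ {⊤}), such that for all events e ∈ E, ξ₂(e) = ξ₁(first_π(e)), where ξ₁(⊤) := ⊤. -/

import Mathlib

namespace Gossip

/-- Events extended with bottom and top elements. -/
inductive ExtEv (E : Type) : Type where
  | bot : ExtEv E
  | evt (e : E) : ExtEv E
  | top : ExtEv E

/-- A message sequence chart (MSC) over processes `P`, alphabet `A`,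
with (finite, nonempty) set of events `E`. -/
structure MSC (P A E : Type) : Type where
  fintypeE : Fintype E
  nonemptyE : Nonempty E
  loc : E → P
  lab : E → A
  /-- process successor relation `→` -/
  next : E → E → Prop
  /-- message relation `◁` -/
  msg : E → E → Prop
  next_loc : ∀ {e f : E}, next e f → loc e = loc f
  next_irrefl : ∀ e : E, ¬ next e e
  next_right_unique : ∀ {e f f' : E}, next e f → next e f' → f = f'
  next_left_unique : ∀ {e e' f : E}, next e f → next e' f → e = e'
  next_total : ∀ e f : E, loc e = loc f →
      Relation.ReflTransGen next e f ∨ Relation.ReflTransGen next f e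
  msg_loc : ∀ {e f : E}, msg e f → loc e ≠ loc f
  /-- every event belongs to at most one pair of `◁` -/
  msg_unique : ∀ {e f e' f' : E}, msg e f → msg e' f' →
      (e = e' ∨ e = f' ∨ f = e' ∨ f = f') → e = e' ∧ f = f'
  fifo : ∀ {e f e' f' : E}, msg e f → msg e' f' → loc e = loc e' → loc f = loc f' →
      (Relation.ReflTransGen next e e' ↔ Relation.ReflTransGen next f f')
  /-- `≤ = (→ ∪ ◁)*` is a partial order -/
  causal_antisymm : ∀ {e f : E},
      Relation.ReflTransGen (fun x y => next x y ∨ msg x y) e f →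
      Relation.ReflTransGen (fun x y => next x y ∨ msg x y) f e → e = f

namespace MSC

variable {P A E B : Type}

/-- the causal order `≤ = (→ ∪ ◁)*` -/
def le (M : MSC P A E) : E → E → Prop :=
  Relation.ReflTransGen (fun x y => M.next x y ∨ M.msg x y)

/-- the strict causal order `<` -/
def lt (M : MSC P A E) (e f : E) : Prop := M.le e f ∧ e ≠ f

/-- `→*` -/
def nextStar (M : MSC P A E) : E → E → Prop := Relation.ReflTransGen M.next

/-- the causal order extended to `E ∪ {⊥,⊤}` with `⊥ < e < ⊤` -/
def extLe (M : MSC P A E) : ExtEv E → ExtEv E → Prop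
  | .bot, _ => True
  | _, .top => True
  | .evt e, .evt f => M.le e f
  | _, _ => False

def extLt (M : MSC P A E) (x y : ExtEv E) : Prop := M.extLe x y ∧ x ≠ y

/-- replace the labelling of an MSC (e.g. to pair it with an extra labelling) -/
def relabel (M : MSC P A E) (μ : E → B) : MSC P B E where
  fintypeE := M.fintypeE
  nonemptyE := M.nonemptyE
  loc := M.loc
  lab := μ
  next := M.next
  msg := M.msg
  next_loc := M.next_loc
  next_irrefl := M.next_irrefl
  next_right_unique := M.next_right_unique
  next_left_unique := M.next_left_unique
  next_total := M.next_total
  msg_loc := M.msg_loc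
  msg_unique := M.msg_unique
  fifo := M.fifo
  causal_antisymm := M.causal_antisymm

end MSC

/-- letters of path expressions: `→`, `→*`, `p▷q`, `⟨a⟩` -/
inductive PathLetter (P A : Type) : Type where
  | next : PathLetter P A
  | nextStar : PathLetter P A
  | msg (p q : P) : PathLetter P A
  | lab (a : A) : PathLetter P A

/-- path expressions: finite words over `Γ` -/
abbrev PathExpr (P A : Type) := List (PathLetter P A)

variable {P A E : Type}

def letterSem (M : MSC P A E) : PathLetter P A → E → E → Prop
  | .next => M.next
  | .nextStar => M.nextStar
  | .msg p q => fun e f => M.loc e = p ∧ M.loc f = q ∧ M.msg e f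
  | .lab a => fun e f => e = f ∧ M.lab e = a

/-- `⟦π⟧` -/
def pathSem (M : MSC P A E) : PathExpr P A → E → E → Prop
  | [] => fun e f => e = f
  | l :: π => fun e g => ∃ f, letterSem M l e f ∧ pathSem M π f g

def letterComp : PathLetter P A → P → P → Prop
  | .msg p q => fun x y => x = p ∧ y = q
  | _ => fun x y => x = y

/-- `Comp(π)`; `π ∈ Π_{p,q}` iff `pcomp π p q` -/
def pcomp : PathExpr P A → P → P → Prop
  | [] => fun x y => x = y
  | l :: π => fun x z => ∃ y, letterComp l x y ∧ pcomp π y z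

/-- `IsLast M π e x` holds iff `x = last_π(e)` (with `x = ⊥` iff no `π`-path into `e`). -/
def IsLast (M : MSC P A E) (π : PathExpr P A) (e : E) : ExtEv E → Prop
  | .bot => ∀ f, ¬ pathSem M π f e
  | .evt g => pathSem M π g e ∧ ∀ f, pathSem M π f e → M.le f g
  | .top => False

/-- `IsFirst M π e x` holds iff `x = first_π(e)` (with `x = ⊤` iff no `π`-path out of `e`). -/
def IsFirst (M : MSC P A E) (π : PathExpr P A) (e : E) : ExtEv E → Prop
  | .top => ∀ f, ¬ pathSem M π e f
  | .evt g => pathSem M π e g ∧ ∀ f, pathSem M π e f → M.le g f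
  | .bot => False

/-- `IsFa M π π' e x` holds iff `x = f_{π,π'}(e) = first_{π'}(last_π(e))`, with
`first_{π'}(⊥) := ⊥`. -/
def IsFa (M : MSC P A E) (π π' : PathExpr P A) (e : E) (x : ExtEv E) : Prop :=
  (IsLast M π e ExtEv.bot ∧ x = ExtEv.bot) ∨
    ∃ g, IsLast M π e (ExtEv.evt g) ∧ IsFirst M π' g x

/-- `IsLastProc M p e x` holds iff `x = last_p(e)`, the maximal event of process `p`
strictly below `e` (`⊥` if none). -/
def IsLastProc (M : MSC P A E) (p : P) (e : E) : ExtEv E → Prop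
  | .bot => ∀ f, M.loc f = p → ¬ M.lt f e
  | .evt g => M.loc g = p ∧ M.lt g e ∧ ∀ f, M.loc f = p → M.lt f e → M.le f g
  | .top => False

/-- `π ≼_e π'`, i.e. `last_π(e) ≤ last_{π'}(e)` -/
def ple (M : MSC P A E) (π π' : PathExpr P A) (e : E) : Prop :=
  ∃ x y, IsLast M π e x ∧ IsLast M π' e y ∧ M.extLe x y

def gossipSuffix : P → List P → PathExpr P A
  | _, [] => []
  | p, q :: w => PathLetter.msg p q :: PathLetter.nextStar :: gossipSuffix q w

/-- `π_w` for `w = p :: rest` -/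
def gossipExpr (p : P) (w : List P) : PathExpr P A :=
  match w with
  | [] => [PathLetter.next, PathLetter.nextStar]
  | _ :: _ => PathLetter.nextStar :: gossipSuffix p w

/-- `π ∈ Π^gossip` -/
def IsGossip (π : PathExpr P A) : Prop :=
  ∃ (p : P) (w : List P), (p :: w).Nodup ∧ π = gossipExpr p w

/-- actions of a CFM transition -/
inductive CAct (P A Msg : Type) : Type where
  | internal (a : A) : CAct P A Msg
  | send (a : A) (m : Msg) (q : P) : CAct P A Msg
  | recv (a : A) (m : Msg) (q : P) : CAct P A Msg

def CAct.labelOf {P A Msg : Type} : CAct P A Msg → A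
  | .internal a => a
  | .send a _ _ => a
  | .recv a _ _ => a

/-- a communicating finite-state machine over `P` and `A` -/
structure CFM (P A : Type) : Type 1 where
  Msg : Type
  msgFin : Fintype Msg
  S : Type
  sFin : Fintype S
  ι : P → S
  Δ : P → Set (S × CAct P A Msg × S)
  Acc : Set (P → S)
  wf_send : ∀ p s a m q s', (s, CAct.send a m q, s') ∈ Δ p → q ≠ p
  wf_recv : ∀ p s a m q s', (s, CAct.recv a m q, s') ∈ Δ p → q ≠ p

namespace CFM

variable {P A E : Type}

/-- `ρ` is a run of the CFM `C` on the MSC `M` -/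
def IsRun (C : CFM P A) (M : MSC P A E) (ρ : E → C.S × CAct P A C.Msg × C.S) : Prop :=
  (∀ e, ρ e ∈ C.Δ (M.loc e)) ∧
  (∀ e, ((ρ e).2.1).labelOf = M.lab e) ∧
  (∀ e, (¬ ∃ f, M.next f e) → (ρ e).1 = C.ι (M.loc e)) ∧
  (∀ e f, M.next e f → (ρ e).2.2 = (ρ f).1) ∧
  (∀ e, (¬ ∃ f, M.msg e f) → (¬ ∃ f, M.msg f e) → ∃ a, (ρ e).2.1 = CAct.internal a) ∧
  (∀ e f, M.msg e f → ∃ m, (ρ e).2.1 = CAct.send (M.lab e) m (M.loc f) ∧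
      (ρ f).2.1 = CAct.recv (M.lab f) m (M.loc e))

/-- the run `ρ` is accepting -/
def IsAccepting (C : CFM P A) (M : MSC P A E)
    (ρ : E → C.S × CAct P A C.Msg × C.S) : Prop :=
  ∃ s : P → C.S, s ∈ C.Acc ∧ ∀ p,
    ((∃ e, M.loc e = p) → ∃ e, M.loc e = p ∧ (¬ ∃ f, M.next e f) ∧ s p = (ρ e).2.2) ∧
    ((¬ ∃ e, M.loc e = p) → s p = C.ι p)

/-- `M ∈ L(C)` -/
def Accepts (C : CFM P A) (M : MSC P A E) : Prop :=
  ∃ ρ, C.IsRun M ρ ∧ C.IsAccepting M ρ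

/-- deterministic CFMs -/
def Deterministic (C : CFM P A) : Prop :=
  ∀ p s γ₁ s₁ γ₂ s₂, (s, γ₁, s₁) ∈ C.Δ p → (s, γ₂, s₂) ∈ C.Δ p →
    CAct.labelOf γ₁ = CAct.labelOf γ₂ →
    ((∀ a₁ a₂, γ₁ = CAct.internal a₁ → γ₂ = CAct.internal a₂ → s₁ = s₂) ∧
     (∀ a₁ m₁ a₂ m₂ q, γ₁ = CAct.send a₁ m₁ q → γ₂ = CAct.send a₂ m₂ q →
        s₁ = s₂ ∧ m₁ = m₂) ∧
     (∀ a₁ a₂ m q, γ₁ = CAct.recv a₁ m q → γ₂ = CAct.recv a₂ m q → s₁ = s₂))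

end CFM

/-- acceptance of the extended MSC `(M, ξ)` by a CFM over a product alphabet -/
def AcceptsExt {P A E Ξ : Type} (C : CFM P (A × Ξ)) (M : MSC P A E) (ξ : E → Ξ) : Prop :=
  C.Accepts (M.relabel fun e => (M.lab e, ξ e))

/-- apply `μ` to an extended event, sending both `⊥` and `⊤` to `none` -/
def extToOptMap {E Θ : Type} (μ : E → Θ) : ExtEv E → Option Θ
  | .evt g => some (μ g)
  | _ => none

/-- apply `μ` to an extended event, preserving `⊥` and `⊤` -/
def extMap {E Θ : Type} (μ : E → Θ) : ExtEv E → ExtEv Θ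
  | .bot => ExtEv.bot
  | .evt g => ExtEv.evt (μ g)
  | .top => ExtEv.top

/-- formulas of the temporal logic TL -/
inductive TL (P A : Type) : Type where
  | lab (a : A) : TL P A
  | proc (p : P) : TL P A
  | disj (φ ψ : TL P A) : TL P A
  | neg (φ : TL P A) : TL P A
  | co (φ : TL P A) : TL P A
  | tuntil (φ ψ : TL P A) : TL P A
  | tsince (φ ψ : TL P A) : TL P A

/-- `M, e ⊨ φ` -/
def TLsat (M : MSC P A E) : TL P A → E → Prop
  | .lab a, e => M.lab e = a
  | .proc p, e => M.loc e = p
  | .disj φ ψ, e => TLsat M φ e ∨ TLsat M ψ e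
  | .neg φ, e => ¬ TLsat M φ e
  | .co φ, e => ∃ f, ¬ M.le e f ∧ ¬ M.le f e ∧ TLsat M φ f
  | .tuntil φ ψ, e => ∃ f, M.lt e f ∧ TLsat M ψ f ∧ ∀ g, M.lt e g → M.lt g f → TLsat M φ g
  | .tsince φ ψ, e => ∃ f, M.lt f e ∧ TLsat M ψ f ∧ ∀ g, M.lt f g → M.lt g e → TLsat M φ g

end Gossip
namespace Gossip
open Relation

variable {P A E : Type}

namespace MSC

variable (M : MSC P A E)

lemma nextStar_le {e f : E} (h : ReflTransGen M.next e f) : M.le e f := by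
  induction h with
  | refl => exact ReflTransGen.refl
  | tail _ hs ih => exact ReflTransGen.tail ih (Or.inl hs)

lemma next_le {e f : E} (h : M.next e f) : M.le e f :=
  ReflTransGen.single (Or.inl h)

lemma msg_le {e f : E} (h : M.msg e f) : M.le e f :=
  ReflTransGen.single (Or.inr h)

lemma le_trans' {e f g : E} (h1 : M.le e f) (h2 : M.le f g) : M.le e g :=
  ReflTransGen.trans h1 h2

lemma nextStar_loc {e f : E} (h : ReflTransGen M.next e f) : M.loc e = M.loc f := by
  induction h with
  | refl => rfl
  | tail _ hstep ih => exact ih.trans (M.next_loc hstep)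

lemma le_iff_nextStar {e f : E} (hloc : M.loc e = M.loc f) :
    M.le e f ↔ ReflTransGen M.next e f := by
  constructor
  · intro h
    rcases M.next_total e f hloc with h1 | h2
    · exact h1
    · have : f = e := M.causal_antisymm (M.nextStar_le h2) h
      subst this; exact ReflTransGen.refl
  · exact M.nextStar_le

lemma next_ne {e f : E} (h : M.next e f) : e ≠ f := by
  intro he; subst he; exact M.next_irrefl e h

lemma lt_next {e f : E} (h : M.next e f) : M.lt e f :=
  ⟨M.next_le h, M.next_ne h⟩

lemma lt_msg {e f : E} (h : M.msg e f) : M.lt e f :=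
  ⟨M.msg_le h, fun he => M.msg_loc h (by rw [he])⟩

lemma lt_trans_le {e f g : E} (h1 : M.lt e f) (h2 : M.le f g) : M.lt e g := by
  refine ⟨M.le_trans' h1.1 h2, fun he => h1.2 ?_⟩
  subst he
  exact M.causal_antisymm h1.1 h2

/-- number of events strictly above `e`; decreases along `<` -/
noncomputable def ht (e : E) : ℕ := Set.ncard {f | M.lt e f}

lemma ht_lt_of_lt {e f : E} (h : M.lt e f) : M.ht f < M.ht e := by
  haveI := M.fintypeE
  apply Set.ncard_lt_ncard _ (Set.toFinite _)
  constructor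
  · intro g hg
    exact M.lt_trans_le h hg.1
  · intro hsub
    have : M.lt f f := hsub h
    exact this.2 rfl

lemma nextStar_antisymm {e f : E} (h1 : ReflTransGen M.next e f)
    (h2 : ReflTransGen M.next f e) : e = f :=
  M.causal_antisymm (M.nextStar_le h1) (M.nextStar_le h2)

lemma exists_min_finset :
    ∀ t : Finset E, t.Nonempty → (∀ g ∈ t, ∀ g' ∈ t, M.loc g = M.loc g') →
      ∃ m ∈ t, ∀ g ∈ t, ReflTransGen M.next m g := by
  classical
  intro t
  induction t using Finset.induction_on with
  | empty => intro h; exact absurd h (by simp)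
  | @insert a s ha ih =>
    intro _ hloc
    by_cases hs : s.Nonempty
    · obtain ⟨m, hm, hmin⟩ := ih hs (fun g hg g' hg' =>
        hloc g (Finset.mem_insert_of_mem hg) g' (Finset.mem_insert_of_mem hg'))
      have hlocam : M.loc a = M.loc m :=
        hloc a (Finset.mem_insert_self a s) m (Finset.mem_insert_of_mem hm)
      rcases M.next_total a m hlocam with h1 | h2
      · refine ⟨a, Finset.mem_insert_self a s, fun g hg => ?_⟩
        rcases Finset.mem_insert.1 hg with rfl | hg
        · exact ReflTransGen.refl
        · exact h1.trans (hmin g hg)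
      · refine ⟨m, Finset.mem_insert_of_mem hm, fun g hg => ?_⟩
        rcases Finset.mem_insert.1 hg with rfl | hg
        · exact h2
        · exact hmin g hg
    · rw [Finset.not_nonempty_iff_eq_empty] at hs
      subst hs
      exact ⟨a, Finset.mem_insert_self a _, fun g hg => by
        rcases Finset.mem_insert.1 hg with rfl | hg
        · exact ReflTransGen.refl
        · exact absurd hg (by simp)⟩

lemma exists_max_finset :
    ∀ t : Finset E, t.Nonempty → (∀ g ∈ t, ∀ g' ∈ t, M.loc g = M.loc g') →
      ∃ m ∈ t, ∀ g ∈ t, ReflTransGen M.next g m := by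
  classical
  intro t
  induction t using Finset.induction_on with
  | empty => intro h; exact absurd h (by simp)
  | @insert a s ha ih =>
    intro _ hloc
    by_cases hs : s.Nonempty
    · obtain ⟨m, hm, hmax⟩ := ih hs (fun g hg g' hg' =>
        hloc g (Finset.mem_insert_of_mem hg) g' (Finset.mem_insert_of_mem hg'))
      have hlocam : M.loc a = M.loc m :=
        hloc a (Finset.mem_insert_self a s) m (Finset.mem_insert_of_mem hm)
      rcases M.next_total a m hlocam with h1 | h2
      · refine ⟨m, Finset.mem_insert_of_mem hm, fun g hg => ?_⟩
        rcases Finset.mem_insert.1 hg with rfl | hg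
        · exact h1
        · exact hmax g hg
      · refine ⟨a, Finset.mem_insert_self a s, fun g hg => ?_⟩
        rcases Finset.mem_insert.1 hg with rfl | hg
        · exact ReflTransGen.refl
        · exact (hmax g hg).trans h2
    · rw [Finset.not_nonempty_iff_eq_empty] at hs
      subst hs
      exact ⟨a, Finset.mem_insert_self a _, fun g hg => by
        rcases Finset.mem_insert.1 hg with rfl | hg
        · exact ReflTransGen.refl
        · exact absurd hg (by simp)⟩

lemma exists_proc_max (p : P) (hp : ∃ e : E, M.loc e = p) :
    ∃ e : E, M.loc e = p ∧ ¬∃ f, M.next e f := by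
  classical
  haveI := M.fintypeE
  obtain ⟨e₀, he₀⟩ := hp
  set t : Finset E := Finset.univ.filter (fun g => M.loc g = p) with ht
  have hmem : ∀ g : E, g ∈ t ↔ M.loc g = p := by
    intro g; simp [ht]
  obtain ⟨m, hm, hmax⟩ := M.exists_max_finset t ⟨e₀, (hmem e₀).2 he₀⟩
    (fun g hg g' hg' => ((hmem g).1 hg).trans ((hmem g').1 hg').symm)
  refine ⟨m, (hmem m).1 hm, ?_⟩
  rintro ⟨f, hf⟩
  have hfp : f ∈ t := (hmem f).2 ((M.next_loc hf).symm.trans ((hmem m).1 hm))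
  have h1 : ReflTransGen M.next f m := hmax f hfp
  have h2 : ReflTransGen M.next m f := ReflTransGen.single hf
  have : m = f := M.nextStar_antisymm h2 h1
  subst this
  exact M.next_irrefl m hf

lemma nonext_unique {e e' : E} (hloc : M.loc e = M.loc e')
    (h1 : ¬∃ f, M.next e f) (h2 : ¬∃ f, M.next e' f) : e = e' := by
  rcases M.next_total e e' hloc with h | h
  · rcases h.cases_head with h' | ⟨c, hc, _⟩
    · exact h'
    · exact absurd ⟨c, hc⟩ h1
  · rcases h.cases_head with h' | ⟨c, hc, _⟩
    · exact h'.symm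
    · exact absurd ⟨c, hc⟩ h2

lemma next_mono {e e' f f' : E} (h : ReflTransGen M.next e e')
    (he : M.next e f) (he' : M.next e' f') : ReflTransGen M.next f f' := by
  rcases h.cases_head with rfl | ⟨x, hx, hxe⟩
  · rw [M.next_right_unique he he']
  · rw [M.next_right_unique he hx] at *
    exact hxe.tail he'

end MSC

end Gossip
namespace Gossip
open Relation

variable {P A E : Type}

lemma pathSem_nil {M : MSC P A E} {e f : E} : pathSem M [] e f ↔ e = f := Iff.rfl

lemma pathSem_cons {M : MSC P A E} {l : PathLetter P A} {π' : PathExpr P A} {e g : E} :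
    pathSem M (l :: π') e g ↔ ∃ f, letterSem M l e f ∧ pathSem M π' f g := Iff.rfl

lemma pathSem_loc (M : MSC P A E) :
    ∀ (π' : PathExpr P A) {e e' g g' : E}, M.loc e = M.loc e' →
      pathSem M π' e g → pathSem M π' e' g' → M.loc g = M.loc g' := by
  intro π'
  induction π' with
  | nil =>
    intro e e' g g' hloc hg hg'
    rw [pathSem_nil] at hg hg'
    rw [← hg, ← hg']; exact hloc
  | cons l τ ih =>
    rintro e e' g g' hloc ⟨f, hl, hp⟩ ⟨f', hl', hp'⟩
    refine ih (e := f) (e' := f') ?_ hp hp'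
    cases l with
    | next => exact (M.next_loc hl).symm.trans (hloc.trans (M.next_loc hl'))
    | nextStar => exact (M.nextStar_loc hl).symm.trans (hloc.trans (M.nextStar_loc hl'))
    | msg p q => exact hl.2.1.trans hl'.2.1.symm
    | lab a =>
      obtain ⟨rfl, -⟩ := hl
      obtain ⟨rfl, -⟩ := hl'
      exact hloc

/-- the key monotonicity lemma: if `e →* e'` and there is some `π'`-path from `e`,
then below any `π'`-endpoint of `e'` there is a `π'`-endpoint of `e`. -/
lemma pathSem_exists_le (M : MSC P A E) :
    ∀ (π' : PathExpr P A) {e e' h g' : E}, ReflTransGen M.next e e' →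
      pathSem M π' e h → pathSem M π' e' g' →
      ∃ g, pathSem M π' e g ∧ ReflTransGen M.next g g' := by
  intro π'
  induction π' with
  | nil =>
    intro e e' h g' hee' hh hg'
    rw [pathSem_nil] at hg'
    exact ⟨e, rfl, hg' ▸ hee'⟩
  | cons l τ ih =>
    rintro e e' h g' hee' ⟨f, hf, hfh⟩ ⟨f', hf', hfg'⟩
    cases l with
    | next =>
      have hff' : ReflTransGen M.next f f' := M.next_mono hee' hf hf'
      obtain ⟨g, hg, hgle⟩ := ih hff' hfh hfg'
      exact ⟨g, ⟨f, hf, hg⟩, hgle⟩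
    | nextStar =>
      exact ⟨g', ⟨f', hee'.trans hf', hfg'⟩, ReflTransGen.refl⟩
    | msg p q =>
      obtain ⟨hep, hfq, hm⟩ := hf
      obtain ⟨hep', hfq', hm'⟩ := hf'
      have hff' : ReflTransGen M.next f f' :=
        (M.fifo hm hm' (hep.trans hep'.symm) (hfq.trans hfq'.symm)).1 hee'
      obtain ⟨g, hg, hgle⟩ := ih hff' hfh hfg'
      exact ⟨g, ⟨f, ⟨hep, hfq, hm⟩, hg⟩, hgle⟩
    | lab a =>
      obtain ⟨rfl, ha⟩ := hf
      obtain ⟨rfl, ha'⟩ := hf'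
      obtain ⟨g, hg, hgle⟩ := ih hee' hfh hfg'
      exact ⟨g, ⟨e, ⟨rfl, ha⟩, hg⟩, hgle⟩

lemma isFirst_unique {M : MSC P A E} {π' : PathExpr P A} {e : E} {x y : ExtEv E}
    (hx : IsFirst M π' e x) (hy : IsFirst M π' e y) : x = y := by
  cases x with
  | bot => exact absurd hx (by simp [IsFirst])
  | evt g =>
    cases y with
    | bot => exact absurd hy (by simp [IsFirst])
    | evt g' =>
      have : g = g' := M.causal_antisymm (hx.2 g' hy.1) (hy.2 g hx.1)
      rw [this]
    | top => exact absurd hx.1 (hy g)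
  | top =>
    cases y with
    | bot => exact absurd hy (by simp [IsFirst])
    | evt g' => exact absurd hy.1 (hx g')
    | top => rfl

lemma isFirst_exists (M : MSC P A E) (π' : PathExpr P A) (e : E) :
    ∃ x, IsFirst M π' e x := by
  classical
  haveI := M.fintypeE
  by_cases h : ∃ g, pathSem M π' e g
  · obtain ⟨g₀, hg₀⟩ := h
    set t : Finset E := Finset.univ.filter (fun g => pathSem M π' e g) with htdef
    have hmem : ∀ g : E, g ∈ t ↔ pathSem M π' e g := by intro g; simp [htdef]
    obtain ⟨m, hm, hmin⟩ := M.exists_min_finset t ⟨g₀, (hmem g₀).2 hg₀⟩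
      (fun g hg g' hg' => pathSem_loc M π' rfl ((hmem g).1 hg) ((hmem g').1 hg'))
    exact ⟨ExtEv.evt m, (hmem m).1 hm,
      fun f hf => M.nextStar_le (hmin f ((hmem f).2 hf))⟩
  · exact ⟨ExtEv.top, fun f hf => h ⟨f, hf⟩⟩

/-- the function `first_{π'}` -/
noncomputable def ffE (M : MSC P A E) (π' : PathExpr P A) (e : E) : ExtEv E :=
  Classical.choose (isFirst_exists M π' e)

lemma ffE_spec (M : MSC P A E) (π' : PathExpr P A) (e : E) :
    IsFirst M π' e (ffE M π' e) :=
  Classical.choose_spec (isFirst_exists M π' e)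

lemma ffE_eq_of {M : MSC P A E} {π' : PathExpr P A} {e : E} {x : ExtEv E}
    (hx : IsFirst M π' e x) : ffE M π' e = x :=
  isFirst_unique (ffE_spec M π' e) hx

lemma isFirst_congr {M : MSC P A E} {π₁ π₂ : PathExpr P A} {e₁ e₂ : E}
    (hset : ∀ g, pathSem M π₁ e₁ g ↔ pathSem M π₂ e₂ g) {x : ExtEv E}
    (hx : IsFirst M π₁ e₁ x) : IsFirst M π₂ e₂ x := by
  cases x with
  | bot => exact absurd hx (by simp [IsFirst])
  | evt g => exact ⟨(hset g).1 hx.1, fun f hf => hx.2 f ((hset f).2 hf)⟩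
  | top => exact fun f hf => hx f ((hset f).2 hf)

lemma ffE_congr {M : MSC P A E} {π₁ π₂ : PathExpr P A} {e₁ e₂ : E}
    (hset : ∀ g, pathSem M π₁ e₁ g ↔ pathSem M π₂ e₂ g) :
    ffE M π₁ e₁ = ffE M π₂ e₂ :=
  ffE_eq_of (isFirst_congr (fun g => (hset g).symm) (ffE_spec M π₂ e₂))

lemma ffE_nil (M : MSC P A E) (e : E) : ffE M [] e = ExtEv.evt e :=
  ffE_eq_of ⟨rfl, fun f hf => by rw [pathSem_nil] at hf; subst hf; exact ReflTransGen.refl⟩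

lemma ffE_top_iff {M : MSC P A E} {π' : PathExpr P A} {e : E} :
    ffE M π' e = ExtEv.top ↔ ¬∃ g, pathSem M π' e g := by
  constructor
  · intro h
    have := ffE_spec M π' e
    rw [h] at this
    rintro ⟨g, hg⟩
    exact this g hg
  · intro h
    exact ffE_eq_of (fun f hf => h ⟨f, hf⟩)

lemma ffE_ne_bot {M : MSC P A E} {π' : PathExpr P A} {e : E} :
    ffE M π' e ≠ ExtEv.bot := by
  intro h
  have := ffE_spec M π' e
  rw [h] at this
  exact this

lemma ffE_lab_pos {M : MSC P A E} {a : A} {τ : PathExpr P A} {e : E}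
    (h : M.lab e = a) : ffE M (PathLetter.lab a :: τ) e = ffE M τ e := by
  apply ffE_congr
  intro g
  constructor
  · rintro ⟨f, ⟨rfl, -⟩, hp⟩; exact hp
  · intro hp; exact ⟨e, ⟨rfl, h⟩, hp⟩

lemma ffE_lab_neg {M : MSC P A E} {a : A} {τ : PathExpr P A} {e : E}
    (h : ¬ M.lab e = a) : ffE M (PathLetter.lab a :: τ) e = ExtEv.top := by
  rw [ffE_top_iff]
  rintro ⟨g, f, ⟨rfl, ha⟩, -⟩
  exact h ha

lemma ffE_next {M : MSC P A E} {τ : PathExpr P A} {e f : E}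
    (h : M.next e f) : ffE M (PathLetter.next :: τ) e = ffE M τ f := by
  apply ffE_congr
  intro g
  constructor
  · rintro ⟨f', hf', hp⟩
    rwa [M.next_right_unique hf' h] at hp
  · intro hp; exact ⟨f, h, hp⟩

lemma ffE_next_top {M : MSC P A E} {τ : PathExpr P A} {e : E}
    (h : ¬∃ f, M.next e f) : ffE M (PathLetter.next :: τ) e = ExtEv.top := by
  rw [ffE_top_iff]
  rintro ⟨g, f, hf, -⟩
  exact h ⟨f, hf⟩

lemma ffE_msg {M : MSC P A E} {τ : PathExpr P A} {e f : E} {p q : P}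
    (hm : M.msg e f) (hp : M.loc e = p) (hq : M.loc f = q) :
    ffE M (PathLetter.msg p q :: τ) e = ffE M τ f := by
  apply ffE_congr
  intro g
  constructor
  · rintro ⟨f', ⟨-, -, hm'⟩, hp'⟩
    rwa [(M.msg_unique hm' hm (Or.inl rfl)).2] at hp'
  · intro hp'; exact ⟨f, ⟨hp, hq, hm⟩, hp'⟩

lemma ffE_msg_top {M : MSC P A E} {τ : PathExpr P A} {e : E} {p q : P}
    (h : ¬∃ f, M.msg e f ∧ M.loc e = p ∧ M.loc f = q) :
    ffE M (PathLetter.msg p q :: τ) e = ExtEv.top := by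
  rw [ffE_top_iff]
  rintro ⟨g, f, ⟨hp, hq, hm⟩, -⟩
  exact h ⟨f, hm, hp, hq⟩

lemma ffE_star_dom {M : MSC P A E} {τ : PathExpr P A} {e : E}
    (h : ∃ g, pathSem M τ e g) :
    ffE M (PathLetter.nextStar :: τ) e = ffE M τ e := by
  have hspec := ffE_spec M τ e
  cases hcase : ffE M τ e with
  | bot => exact absurd hcase ffE_ne_bot
  | top => exact absurd h (by rwa [← ffE_top_iff])
  | evt m =>
    rw [hcase] at hspec
    apply ffE_eq_of
    refine ⟨⟨e, ReflTransGen.refl, hspec.1⟩, ?_⟩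
    rintro g' ⟨h', hns, hτ⟩
    obtain ⟨g, hg, hgle⟩ := pathSem_exists_le M τ hns hspec.1 hτ
    exact M.le_trans' (hspec.2 g hg) (M.nextStar_le hgle)

lemma ffE_star_next {M : MSC P A E} {τ : PathExpr P A} {e f : E}
    (h : ¬∃ g, pathSem M τ e g) (hf : M.next e f) :
    ffE M (PathLetter.nextStar :: τ) e = ffE M (PathLetter.nextStar :: τ) f := by
  apply ffE_congr
  intro g
  constructor
  · rintro ⟨h', hns, hτ⟩
    rcases ReflTransGen.cases_head hns with rfl | ⟨x, hx, hxh'⟩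
    · exact absurd ⟨g, hτ⟩ h
    · rw [M.next_right_unique hf hx]
      exact ⟨h', hxh', hτ⟩
  · rintro ⟨h', hns, hτ⟩
    exact ⟨h', ReflTransGen.head hf hns, hτ⟩

lemma ffE_star_top {M : MSC P A E} {τ : PathExpr P A} {e : E}
    (h : ¬∃ g, pathSem M τ e g) (hnf : ¬∃ f, M.next e f) :
    ffE M (PathLetter.nextStar :: τ) e = ExtEv.top := by
  rw [ffE_top_iff]
  rintro ⟨g, h', hns, hτ⟩
  rcases ReflTransGen.cases_head hns with rfl | ⟨x, hx, -⟩
  · exact h ⟨g, hτ⟩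
  · exact hnf ⟨x, hx⟩

end Gossip
namespace Gossip
open Relation

variable {P A E Θ : Type}

-- one step of the recurrence characterizing `first_π` values
open Classical in
def SolStep (M : MSC P A E) (W : E → ℕ → Option Θ) (e : E) (i : ℕ) :
    PathLetter P A → Prop
  | .lab a => W e i = if M.lab e = a then W e (i+1) else none
  | .next => (∀ f, M.next e f → W e i = W f (i+1)) ∧
      ((¬∃ f, M.next e f) → W e i = none)
  | .nextStar => (W e (i+1) ≠ none → W e i = W e (i+1)) ∧
      (W e (i+1) = none →
        (∀ f, M.next e f → W e i = W f i) ∧ ((¬∃ f, M.next e f) → W e i = none))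
  | .msg p q => (∀ f, M.msg e f → M.loc e = p → M.loc f = q → W e i = W f (i+1)) ∧
      ((¬∃ f, M.msg e f ∧ M.loc e = p ∧ M.loc f = q) → W e i = none)

def Sol (M : MSC P A E) (ξ₁ : E → Θ) (π : PathExpr P A) (W : E → ℕ → Option Θ) : Prop :=
  (∀ e, W e π.length = some (ξ₁ e)) ∧
  ∀ e (i : ℕ) (h : i < π.length), SolStep M W e i (π.get ⟨i, h⟩)

/-- the true value function: `ξ₁` of `first` of the `i`-th suffix of `π` -/
noncomputable def vtv (M : MSC P A E) (ξ₁ : E → Θ) (π : PathExpr P A)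
    (e : E) (i : ℕ) : Option Θ :=
  extToOptMap ξ₁ (ffE M (π.drop i) e)

lemma vtv_def (M : MSC P A E) (ξ₁ : E → Θ) (π : PathExpr P A) (e : E) (i : ℕ) :
    vtv M ξ₁ π e i = extToOptMap ξ₁ (ffE M (π.drop i) e) := rfl

lemma vtv_none_iff {M : MSC P A E} {ξ₁ : E → Θ} {π : PathExpr P A} {e : E} {i : ℕ} :
    vtv M ξ₁ π e i = none ↔ ¬∃ g, pathSem M (π.drop i) e g := by
  rw [vtv_def]
  cases hcase : ffE M (π.drop i) e with
  | bot => exact absurd hcase ffE_ne_bot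
  | top =>
    exact iff_of_true rfl (ffE_top_iff.1 hcase)
  | evt g =>
    have hspec := ffE_spec M (π.drop i) e
    rw [hcase] at hspec
    exact iff_of_false (by simp [extToOptMap]) (fun h => h ⟨g, hspec.1⟩)

lemma sol_vtv (M : MSC P A E) (ξ₁ : E → Θ) (π : PathExpr P A) :
    Sol M ξ₁ π (vtv M ξ₁ π) := by
  classical
  constructor
  · intro e
    rw [vtv_def, List.drop_length, ffE_nil]
    rfl
  · intro e i h
    have hdrop : π.drop i = π.get ⟨i, h⟩ :: π.drop (i+1) := by
      rw [List.drop_eq_getElem_cons h]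
      rfl
    cases hl : π.get ⟨i, h⟩ with
    | lab a =>
      rw [hl] at hdrop
      simp only [SolStep]
      by_cases hla : M.lab e = a
      · rw [if_pos hla, vtv_def, vtv_def, hdrop, ffE_lab_pos hla]
      · rw [if_neg hla, vtv_def, hdrop, ffE_lab_neg hla]
        rfl
    | next =>
      rw [hl] at hdrop
      simp only [SolStep]
      constructor
      · intro f hf
        rw [vtv_def, vtv_def, hdrop, ffE_next hf]
      · intro hex
        rw [vtv_def, hdrop, ffE_next_top hex]
        rfl
    | nextStar =>
      rw [hl] at hdrop
      simp only [SolStep]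
      constructor
      · intro hne
        have hdom : ∃ g, pathSem M (π.drop (i+1)) e g := by
          by_contra hno
          exact hne (vtv_none_iff.2 hno)
        rw [vtv_def, vtv_def, hdrop, ffE_star_dom hdom]
      · intro hnone
        have hno := vtv_none_iff.1 hnone
        constructor
        · intro f hf
          rw [vtv_def, vtv_def, hdrop, ffE_star_next hno hf]
        · intro hnf
          rw [vtv_def, hdrop, ffE_star_top hno hnf]
          rfl
    | msg p q =>
      rw [hl] at hdrop
      simp only [SolStep]
      constructor
      · intro f hm hp hq
        rw [vtv_def, vtv_def, hdrop, ffE_msg hm hp hq]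
      · intro hex
        rw [vtv_def, hdrop, ffE_msg_top hex]
        rfl

lemma sol_unique {M : MSC P A E} {ξ₁ : E → Θ} {π : PathExpr P A}
    {W₁ W₂ : E → ℕ → Option Θ} (h₁ : Sol M ξ₁ π W₁) (h₂ : Sol M ξ₁ π W₂) :
    ∀ (e : E) (i : ℕ), i ≤ π.length → W₁ e i = W₂ e i := by
  classical
  suffices H : ∀ (N : ℕ) (e : E) (i : ℕ), i ≤ π.length →
      M.ht e * (π.length + 1) + (π.length - i) < N → W₁ e i = W₂ e i by
    intro e i hi
    exact H (M.ht e * (π.length + 1) + (π.length - i) + 1) e i hi (Nat.lt_succ_self _)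
  intro N
  induction N with
  | zero => intro e i hi hμ; exact absurd hμ (Nat.not_lt_zero _)
  | succ N ih =>
    intro e i hi hμ
    have hμ' : M.ht e * (π.length + 1) + (π.length - i) ≤ N := Nat.lt_succ_iff.mp hμ
    rcases Nat.lt_or_ge i π.length with hlt | hge
    · have hstep : ∀ (f : E) (j : ℕ), M.lt e f → j ≤ π.length → W₁ f j = W₂ f j := by
        intro f j hf hj
        apply ih f j hj
        have h1 : M.ht f + 1 ≤ M.ht e := M.ht_lt_of_lt hf
        have h2 : (M.ht f + 1) * (π.length + 1) ≤ M.ht e * (π.length + 1) :=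
          Nat.mul_le_mul_right _ h1
        calc M.ht f * (π.length + 1) + (π.length - j)
            < M.ht f * (π.length + 1) + (π.length + 1) := by omega
          _ = (M.ht f + 1) * (π.length + 1) := by ring
          _ ≤ M.ht e * (π.length + 1) := h2
          _ ≤ N := le_trans (Nat.le_add_right _ _) hμ'
      have hsucc : W₁ e (i+1) = W₂ e (i+1) := by
        apply ih e (i+1) hlt
        have h3 : π.length - (i+1) < π.length - i := by omega
        generalize M.ht e * (π.length + 1) = X at hμ' ⊢
        omega
      have c₁ := h₁.2 e i hlt
      have c₂ := h₂.2 e i hlt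
      cases hl : π.get ⟨i, hlt⟩ with
      | lab a =>
        rw [hl] at c₁ c₂
        simp only [SolStep] at c₁ c₂
        rw [c₁, c₂, hsucc]
      | next =>
        rw [hl] at c₁ c₂
        simp only [SolStep] at c₁ c₂
        by_cases hex : ∃ f, M.next e f
        · obtain ⟨f, hf⟩ := hex
          rw [c₁.1 f hf, c₂.1 f hf, hstep f (i+1) (M.lt_next hf) hlt]
        · rw [c₁.2 hex, c₂.2 hex]
      | nextStar =>
        rw [hl] at c₁ c₂
        simp only [SolStep] at c₁ c₂
        by_cases hnone : W₁ e (i+1) = none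
        · have hnone₂ : W₂ e (i+1) = none := hsucc ▸ hnone
          have d₁ := c₁.2 hnone
          have d₂ := c₂.2 hnone₂
          by_cases hex : ∃ f, M.next e f
          · obtain ⟨f, hf⟩ := hex
            rw [d₁.1 f hf, d₂.1 f hf, hstep f i (M.lt_next hf) (le_of_lt hlt)]
          · rw [d₁.2 hex, d₂.2 hex]
        · have hnone₂ : ¬ W₂ e (i+1) = none := fun h => hnone (hsucc.trans h)
          rw [c₁.1 hnone, c₂.1 hnone₂, hsucc]
      | msg p q =>
        rw [hl] at c₁ c₂
        simp only [SolStep] at c₁ c₂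
        by_cases hex : ∃ f, M.msg e f ∧ M.loc e = p ∧ M.loc f = q
        · obtain ⟨f, hm, hp, hq⟩ := hex
          rw [c₁.1 f hm hp hq, c₂.1 f hm hp hq, hstep f (i+1) (M.lt_msg hm) hlt]
        · rw [c₁.2 hex, c₂.2 hex]
    · have hieq : i = π.length := le_antisymm hi hge
      rw [hieq, h₁.1 e, h₂.1 e]

end Gossip
namespace Gossip
open Relation

/-- value vectors: one claimed `Option Θ` value per suffix of `π` -/
abbrev GVal (Θ : Type) (n : ℕ) : Type := Fin (n+1) → Option Θ

/-- canonical indexing into value vectors -/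
def fidx (n i : ℕ) : Fin (n+1) := ⟨min i n, by omega⟩

/-- states: `none` = initial, `some none` = final, `some (some V)` = claim that the
next event on the process has value vector `V` -/
abbrev GSt (Θ : Type) (n : ℕ) : Type := Option (Option (GVal Θ n))

open Classical in
noncomputable def stepVal {P A : Type} (Θ : Type) (n : ℕ) (p : P) (V : GVal Θ n)
    (γ : CAct P (A × Θ × Option Θ) (GVal Θ n)) (s' : GSt Θ n) (i : ℕ) (h : i < n) :
    PathLetter P A → Option Θ
  | .lab a => if γ.labelOf.1 = a then V (fidx n (i+1)) else none
  | .next => match s' with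
      | some (some U) => U (fidx n (i+1))
      | _ => none
  | .nextStar =>
      match V (fidx n (i+1)) with
      | some v => some v
      | none => match s' with
          | some (some U) => U (fidx n i)
          | _ => none
  | .msg p' q' =>
      match γ with
      | CAct.send _ m q'' => if p = p' ∧ q'' = q' then m (fidx n (i+1)) else none
      | _ => none

def Good {P A : Type} (Θ : Type) (π : PathExpr P A) (p : P) (V : GVal Θ π.length)
    (s : GSt Θ π.length) (γ : CAct P (A × Θ × Option Θ) (GVal Θ π.length))
    (s' : GSt Θ π.length) : Prop :=
  (s = none ∨ s = some (some V)) ∧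
  (s' = some none ∨ ∃ U, s' = some (some U)) ∧
  (V (fidx π.length π.length) = some γ.labelOf.2.1) ∧
  (γ.labelOf.2.2 = V (fidx π.length 0)) ∧
  (∀ a m q, γ = CAct.recv a m q → m = V) ∧
  (∀ a m q, γ = CAct.send a m q → q ≠ p) ∧
  (∀ a m q, γ = CAct.recv a m q → q ≠ p) ∧
  (∀ (i : ℕ) (h : i < π.length),
     V (fidx π.length i) = stepVal Θ π.length p V γ s' i h (π.get ⟨i, h⟩))

noncomputable def theCFM (P A Θ : Type) [Fintype Θ] (π : PathExpr P A) :
    CFM P (A × Θ × Option Θ) where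
  Msg := GVal Θ π.length
  msgFin := inferInstance
  S := GSt Θ π.length
  sFin := inferInstance
  ι := fun _ => none
  Δ := fun p => { t | ∃ V, Good Θ π p V t.1 t.2.1 t.2.2 }
  Acc := { s | ∀ p, s p = none ∨ s p = some none }
  wf_send := by
    rintro p s a m q s' ⟨V, hG⟩
    exact hG.2.2.2.2.2.1 a m q rfl
  wf_recv := by
    rintro p s a m q s' ⟨V, hG⟩
    exact hG.2.2.2.2.2.2.1 a m q rfl

end Gossip
namespace Gossip
open Relation

variable {P A E Θ : Type}

lemma MSC.no_chain (M : MSC P A E) {e f g : E} (h1 : M.msg e f) (h2 : M.msg f g) :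
    False := by
  have hfe := M.msg_unique h2 h1 (Or.inr (Or.inl rfl))
  exact M.msg_loc h1 (congrArg M.loc hfe.1.symm)

theorem gossip_sound [Fintype Θ] (π : PathExpr P A) (M : MSC P A E)
    (ξ : E → Θ × Option Θ)
    (hacc : AcceptsExt (theCFM P A Θ π) M ξ) :
    ∀ (e : E) (x : ExtEv E), IsFirst M π e x →
      (ξ e).2 = extToOptMap (fun g => (ξ g).1) x := by
  classical
  obtain ⟨ρ, hrun, haccpt⟩ := hacc
  obtain ⟨h1, h2, h3, h4, h5, h6⟩ := hrun
  obtain ⟨s, hsAcc, hs⟩ := haccpt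
  have hmem : ∀ e, ∃ V : GVal Θ π.length,
      Good Θ π (M.loc e) V (ρ e).1 (ρ e).2.1 (ρ e).2.2 := fun e => h1 e
  choose V hV using hmem
  have labelKey : ∀ e, CAct.labelOf (Msg := GVal Θ π.length) ((ρ e).2.1) = (M.lab e, ξ e) :=
      fun e => h2 e
  -- the final component of the state of a non-maximal event is the vector of its successor
  have key_next : ∀ e f, M.next e f → (ρ e).2.2 = some (some (V f)) := by
    intro e f hf
    have h4' : (ρ e).2.2 = (ρ f).1 := h4 e f hf
    rcases (hV f).1 with hin | hin
    · have hx : (ρ e).2.2 = none := h4'.trans hin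
      rcases (hV e).2.1 with h' | ⟨U, h'⟩ <;> rw [h'] at hx <;> cases hx
    · exact h4'.trans hin
  -- the state after a maximal event is the end marker
  have key_end : ∀ e, (¬∃ f, M.next e f) → (ρ e).2.2 = some none := by
    intro e hne
    obtain ⟨e', he'p, hmax', hse'⟩ := (hs (M.loc e)).1 ⟨e, rfl⟩
    have hee : e' = e := M.nonext_unique he'p hmax' hne
    subst hee
    rcases hsAcc (M.loc e') with h' | h'
    · exfalso
      have hx : (ρ e').2.2 = none := hse'.symm.trans h'
      rcases (hV e').2.1 with h'' | ⟨U, h''⟩ <;> rw [h''] at hx <;> cases hx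
    · exact hse'.symm.trans h'
  -- a send event carries the vector of the receiving event
  have key_msg : ∀ e f, M.msg e f →
      (ρ e).2.1 = CAct.send (M.lab e, ξ e) (V f) (M.loc f) := by
    intro e f hm
    obtain ⟨m, hsend, hrecv⟩ := h6 e f hm
    have hmV : m = V f := (hV f).2.2.2.2.1 _ _ _ hrecv
    rw [hmV] at hsend
    exact hsend
  -- the extracted vectors solve the recurrences
  set W : E → ℕ → Option Θ := fun e i => V e (fidx π.length i) with hWdef
  have W_eq : ∀ e (i : ℕ), W e i = V e (fidx π.length i) := fun e i => rfl
  have hSol : Sol M (fun g => (ξ g).1) π W := by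
    constructor
    · intro e
      have hc := (hV e).2.2.1
      rw [labelKey e] at hc
      exact hc
    · intro e i hlt
      have hcl := (hV e).2.2.2.2.2.2.2 i hlt
      cases hl : π.get ⟨i, hlt⟩ with
      | lab a =>
        rw [hl] at hcl
        simp only [stepVal] at hcl
        simp only [SolStep]
        by_cases hla : M.lab e = a
        · have hla' : (CAct.labelOf (Msg := GVal Θ π.length) (ρ e).2.1).1 = a := by rw [labelKey e]; exact hla
          rw [if_pos hla'] at hcl
          rw [if_pos hla]
          exact hcl
        · have hla' : ¬ (CAct.labelOf (Msg := GVal Θ π.length) (ρ e).2.1).1 = a := by rw [labelKey e]; exact hla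
          rw [if_neg hla'] at hcl
          rw [if_neg hla]
          exact hcl
      | next =>
        rw [hl] at hcl
        simp only [stepVal] at hcl
        simp only [SolStep]
        constructor
        · intro f hf
          rw [key_next e f hf] at hcl
          exact hcl
        · intro hne
          rw [key_end e hne] at hcl
          exact hcl
      | nextStar =>
        rw [hl] at hcl
        simp only [stepVal] at hcl
        simp only [SolStep]
        constructor
        · intro hWne
          cases hv : V e (fidx π.length (i+1)) with
          | none => exact absurd hv hWne
          | some v =>
            rw [hv] at hcl
            show V e (fidx π.length i) = V e (fidx π.length (i+1))
            rw [hv]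
            exact hcl
        · intro hWnone
          have hWnone' : V e (fidx π.length (i+1)) = none := hWnone
          rw [hWnone'] at hcl
          constructor
          · intro f hf
            rw [key_next e f hf] at hcl
            exact hcl
          · intro hne
            rw [key_end e hne] at hcl
            exact hcl
      | msg p q =>
        rw [hl] at hcl
        simp only [stepVal] at hcl
        simp only [SolStep]
        constructor
        · intro f hm hp hq
          rw [key_msg e f hm] at hcl
          have hcl' : V e (fidx π.length i) =
              if M.loc e = p ∧ M.loc f = q then V f (fidx π.length (i+1)) else none := hcl
          rw [if_pos ⟨hp, hq⟩] at hcl'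
          exact hcl'
        · intro hno
          by_cases hsend : ∃ f, M.msg e f
          · obtain ⟨f, hm⟩ := hsend
            have hnot : ¬(M.loc e = p ∧ M.loc f = q) :=
              fun hx => hno ⟨f, hm, hx.1, hx.2⟩
            rw [key_msg e f hm] at hcl
            have hcl' : V e (fidx π.length i) =
                if M.loc e = p ∧ M.loc f = q then V f (fidx π.length (i+1)) else none := hcl
            rw [if_neg hnot] at hcl'
            exact hcl'
          · by_cases hrecv : ∃ f, M.msg f e
            · obtain ⟨f, hm⟩ := hrecv
              obtain ⟨m, hs', hr'⟩ := h6 f e hm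
              rw [hr'] at hcl
              exact hcl
            · obtain ⟨a, hint⟩ := h5 e hsend hrecv
              rw [hint] at hcl
              exact hcl
  -- conclude
  have hfinal : ∀ e, W e 0 = vtv M (fun g => (ξ g).1) π e 0 :=
    fun e => sol_unique hSol (sol_vtv M (fun g => (ξ g).1) π) e 0 (Nat.zero_le _)
  intro e x hx
  have hxeq : x = ffE M π e := isFirst_unique hx (ffE_spec M π e)
  have hc4 := (hV e).2.2.2.1
  rw [labelKey e] at hc4
  have hW0 : W e 0 = V e (fidx π.length 0) := W_eq e 0
  have : (ξ e).2 = vtv M (fun g => (ξ g).1) π e 0 := by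
    rw [← hfinal e, hW0]
    exact hc4
  rw [hxeq, this, vtv_def, List.drop_zero]

end Gossip
namespace Gossip
open Relation

variable {P A E Θ : Type}

theorem gossip_complete [Fintype Θ] (π : PathExpr P A) (M : MSC P A E)
    (ξ : E → Θ × Option Θ)
    (h : ∀ (e : E) (x : ExtEv E), IsFirst M π e x →
      (ξ e).2 = extToOptMap (fun g => (ξ g).1) x) :
    AcceptsExt (theCFM P A Θ π) M ξ := by
  classical
  set ξ₁ : E → Θ := fun g => (ξ g).1 with hξ₁def
  have hξ : ∀ e, (ξ e).2 = vtv M ξ₁ π e 0 := by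
    intro e
    have := h e (ffE M π e) (ffE_spec M π e)
    rw [this, vtv_def, List.drop_zero]
  set Vt : E → GVal Θ π.length := fun e j => vtv M ξ₁ π e j.1 with hVtdef
  have hVt : ∀ (e : E) (i : ℕ), i ≤ π.length →
      Vt e (fidx π.length i) = vtv M ξ₁ π e i := by
    intro e i hi
    show vtv M ξ₁ π e (min i π.length) = vtv M ξ₁ π e i
    rw [min_eq_left hi]
  set sIn : E → GSt Θ π.length :=
    fun e => if ∃ f, M.next f e then some (some (Vt e)) else none with hsIndef
  set sOut : E → GSt Θ π.length :=
    fun e => if hnx : ∃ f, M.next e f then some (some (Vt hnx.choose)) else some none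
    with hsOutdef
  set γv : E → CAct P (A × Θ × Option Θ) (GVal Θ π.length) := fun e =>
    if hms : ∃ f, M.msg e f then
      CAct.send (M.lab e, ξ e) (Vt hms.choose) (M.loc hms.choose)
    else if hmr : ∃ f, M.msg f e then
      CAct.recv (M.lab e, ξ e) (Vt e) (M.loc hmr.choose)
    else CAct.internal (M.lab e, ξ e) with hγdef
  have hlabel : ∀ e, (γv e).labelOf = (M.lab e, ξ e) := by
    intro e
    simp only [hγdef]
    by_cases h1 : ∃ f, M.msg e f
    · rw [dif_pos h1]; rfl
    · rw [dif_neg h1]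
      by_cases h2 : ∃ f, M.msg f e
      · rw [dif_pos h2]; rfl
      · rw [dif_neg h2]; rfl
  have hsOut_next : ∀ e f, M.next e f → sOut e = some (some (Vt f)) := by
    intro e f hf
    have hex : ∃ f, M.next e f := ⟨f, hf⟩
    have hch : hex.choose = f := M.next_right_unique hex.choose_spec hf
    simp only [hsOutdef]
    simp only [dif_pos hex, hch]
  have hsOut_end : ∀ e, (¬∃ f, M.next e f) → sOut e = some none := by
    intro e hne; simp only [hsOutdef]; simp only [dif_neg hne]
  have hγ_send : ∀ e f, M.msg e f →
      γv e = CAct.send (M.lab e, ξ e) (Vt f) (M.loc f) := by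
    intro e f hm
    have hex : ∃ g, M.msg e g := ⟨f, hm⟩
    have hch : hex.choose = f := (M.msg_unique hex.choose_spec hm (Or.inl rfl)).2
    simp only [hγdef]
    simp only [dif_pos hex, hch]
  have hγ_recv : ∀ e f, M.msg f e →
      γv e = CAct.recv (M.lab e, ξ e) (Vt e) (M.loc f) := by
    intro e f hm
    have hno : ¬∃ g, M.msg e g := fun hg => M.no_chain hm hg.choose_spec
    have hex : ∃ g, M.msg g e := ⟨f, hm⟩
    have hch : hex.choose = f :=
      (M.msg_unique hex.choose_spec hm (Or.inr (Or.inr (Or.inr rfl)))).1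
    simp only [hγdef]
    simp only [dif_neg hno, dif_pos hex, hch]
  have hγ_int : ∀ e, (¬∃ f, M.msg e f) → (¬∃ f, M.msg f e) →
      γv e = CAct.internal (M.lab e, ξ e) := by
    intro e h1 h2; simp only [hγdef]; simp only [dif_neg h1, dif_neg h2]
  have hsol := sol_vtv M ξ₁ π
  -- every transition of the constructed run is good
  have hgood : ∀ e, Good Θ π (M.loc e) (Vt e) (sIn e) (γv e) (sOut e) := by
    intro e
    refine ⟨?_, ?_, ?_, ?_, ?_, ?_, ?_, ?_⟩
    · simp only [hsIndef]
      by_cases h1 : ∃ f, M.next f e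
      · rw [if_pos h1]; exact Or.inr rfl
      · rw [if_neg h1]; exact Or.inl rfl
    · simp only [hsOutdef]
      by_cases h1 : ∃ f, M.next e f
      · rw [dif_pos h1]; exact Or.inr ⟨_, rfl⟩
      · rw [dif_neg h1]; exact Or.inl rfl
    · rw [hlabel e, hVt e π.length le_rfl]
      exact hsol.1 e
    · rw [hlabel e, hVt e 0 (Nat.zero_le _)]
      exact hξ e
    · intro a m q hre
      by_cases h1 : ∃ f, M.msg e f
      · rw [hγ_send e h1.choose h1.choose_spec] at hre
        exact absurd hre (by simp)
      · by_cases h2 : ∃ f, M.msg f e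
        · rw [hγ_recv e h2.choose h2.choose_spec] at hre
          injection hre with _ h' _
          exact h'.symm
        · rw [hγ_int e h1 h2] at hre
          exact absurd hre (by simp)
    · intro a m q hse
      by_cases h1 : ∃ f, M.msg e f
      · rw [hγ_send e h1.choose h1.choose_spec] at hse
        injection hse with _ _ h'
        rw [← h']
        exact fun hq => M.msg_loc h1.choose_spec hq.symm
      · by_cases h2 : ∃ f, M.msg f e
        · rw [hγ_recv e h2.choose h2.choose_spec] at hse
          exact absurd hse (by simp)
        · rw [hγ_int e h1 h2] at hse
          exact absurd hse (by simp)
    · intro a m q hre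
      by_cases h1 : ∃ f, M.msg e f
      · rw [hγ_send e h1.choose h1.choose_spec] at hre
        exact absurd hre (by simp)
      · by_cases h2 : ∃ f, M.msg f e
        · rw [hγ_recv e h2.choose h2.choose_spec] at hre
          injection hre with _ _ h'
          rw [← h']
          exact fun hq => M.msg_loc h2.choose_spec hq
        · rw [hγ_int e h1 h2] at hre
          exact absurd hre (by simp)
    · intro i hlt
      have hstep := hsol.2 e i hlt
      cases hl : π.get ⟨i, hlt⟩ with
      | lab a =>
        rw [hl] at hstep
        simp only [SolStep] at hstep
        simp only [stepVal, hlabel e]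
        by_cases hla : M.lab e = a
        · rw [if_pos hla] at hstep
          rw [if_pos (show (M.lab e, ξ e).1 = a from hla),
            hVt e i (le_of_lt hlt), hVt e (i+1) hlt]
          exact hstep
        · rw [if_neg hla] at hstep
          rw [if_neg (show ¬ (M.lab e, ξ e).1 = a from hla), hVt e i (le_of_lt hlt)]
          exact hstep
      | next =>
        rw [hl] at hstep
        simp only [SolStep] at hstep
        simp only [stepVal]
        by_cases hnx : ∃ f, M.next e f
        · obtain ⟨f, hf⟩ := hnx
          rw [hsOut_next e f hf]
          show Vt e (fidx π.length i) = Vt f (fidx π.length (i+1))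
          rw [hVt e i (le_of_lt hlt), hVt f (i+1) hlt]
          exact hstep.1 f hf
        · rw [hsOut_end e hnx]
          show Vt e (fidx π.length i) = none
          rw [hVt e i (le_of_lt hlt)]
          exact hstep.2 hnx
      | nextStar =>
        rw [hl] at hstep
        simp only [SolStep] at hstep
        simp only [stepVal]
        by_cases hvn : vtv M ξ₁ π e (i+1) = none
        · have hvt : Vt e (fidx π.length (i+1)) = none := by
            rw [hVt e (i+1) hlt]; exact hvn
          rw [hvt]
          have hstep2 := hstep.2 hvn
          by_cases hnx : ∃ f, M.next e f
          · obtain ⟨f, hf⟩ := hnx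
            rw [hsOut_next e f hf]
            show Vt e (fidx π.length i) = Vt f (fidx π.length i)
            rw [hVt e i (le_of_lt hlt), hVt f i (le_of_lt hlt)]
            exact hstep2.1 f hf
          · rw [hsOut_end e hnx]
            show Vt e (fidx π.length i) = none
            rw [hVt e i (le_of_lt hlt)]
            exact hstep2.2 hnx
        · obtain ⟨v, hv⟩ := Option.ne_none_iff_exists'.mp hvn
          have hvt : Vt e (fidx π.length (i+1)) = some v := by
            rw [hVt e (i+1) hlt]; exact hv
          rw [hvt]
          show Vt e (fidx π.length i) = some v
          rw [hVt e i (le_of_lt hlt)]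
          exact (hstep.1 hvn).trans hv
      | msg p q =>
        rw [hl] at hstep
        simp only [SolStep] at hstep
        simp only [stepVal]
        by_cases hms : ∃ f, M.msg e f
        · obtain ⟨f, hm⟩ := hms
          rw [hγ_send e f hm]
          show Vt e (fidx π.length i) =
            if M.loc e = p ∧ M.loc f = q then Vt f (fidx π.length (i+1)) else none
          by_cases hpq : M.loc e = p ∧ M.loc f = q
          · rw [if_pos hpq, hVt e i (le_of_lt hlt), hVt f (i+1) hlt]
            exact hstep.1 f hm hpq.1 hpq.2
          · rw [if_neg hpq, hVt e i (le_of_lt hlt)]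
            refine hstep.2 ?_
            rintro ⟨f', hm', hp', hq'⟩
            have hff : f' = f := (M.msg_unique hm' hm (Or.inl rfl)).2
            exact hpq ⟨hp', hff ▸ hq'⟩
        · by_cases hmr : ∃ f, M.msg f e
          · obtain ⟨f, hm⟩ := hmr
            rw [hγ_recv e f hm]
            show Vt e (fidx π.length i) = none
            rw [hVt e i (le_of_lt hlt)]
            exact hstep.2 (fun hx => hms ⟨hx.choose, hx.choose_spec.1⟩)
          · rw [hγ_int e hms hmr]
            show Vt e (fidx π.length i) = none
            rw [hVt e i (le_of_lt hlt)]
            exact hstep.2 (fun hx => hms ⟨hx.choose, hx.choose_spec.1⟩)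
  -- assemble the run
  refine ⟨fun e => (sIn e, γv e, sOut e), ⟨?_, ?_, ?_, ?_, ?_, ?_⟩, ?_⟩
  · intro e
    exact ⟨Vt e, hgood e⟩
  · intro e
    exact hlabel e
  · intro e hnp
    show sIn e = none
    simp only [hsIndef]
    exact if_neg hnp
  · intro e f hf
    show sOut e = sIn f
    have hsf : sIn f = some (some (Vt f)) := by
      simp only [hsIndef]; exact if_pos ⟨e, hf⟩
    rw [hsOut_next e f hf, hsf]
  · intro e h1 h2
    exact ⟨(M.lab e, ξ e), hγ_int e h1 h2⟩
  · intro e f hm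
    exact ⟨Vt f, hγ_send e f hm, hγ_recv f e hm⟩
  · refine ⟨fun p => if ∃ e, M.loc e = p then some none else none, ?_, ?_⟩
    · intro p
      show (if ∃ e, M.loc e = p then (some none : GSt Θ π.length) else none) = none ∨
        (if ∃ e, M.loc e = p then (some none : GSt Θ π.length) else none) = some none
      by_cases h1 : ∃ e, M.loc e = p
      · rw [if_pos h1]; exact Or.inr rfl
      · rw [if_neg h1]; exact Or.inl rfl
    · intro p
      constructor
      · intro hex
        have hex' : ∃ e, M.loc e = p := hex
        obtain ⟨e₀, he₀, hmax⟩ := M.exists_proc_max p hex'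
        refine ⟨e₀, he₀, hmax, ?_⟩
        show (if ∃ e, M.loc e = p then (some none : GSt Θ π.length) else none) = sOut e₀
        rw [if_pos hex', hsOut_end e₀ hmax]
      · intro hnex
        have hnex' : ¬∃ e, M.loc e = p := hnex
        show (if ∃ e, M.loc e = p then (some none : GSt Θ π.length) else none) =
          (theCFM P A Θ π).ι p
        rw [if_neg hnex']
        rfl

end Gossip
open Gossip in
/-- Lemma 5: there is a CFM recognizing exactly the extended MSCs
`(M, ξ)` with `ξ(e) = (ξ₁(e), ξ₂(e))` such that `ξ₂(e) = ξ₁(first_π(e))` for all `e`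
(with `ξ₁(⊤) = ⊤`). -/
theorem stmt13 {P A : Type} [Fintype P] [Fintype A] (Θ : Type) [Fintype Θ]
    (π : PathExpr P A) :
    ∃ C : CFM P (A × (Θ × Option Θ)),
      ∀ (E : Type) (M : MSC P A E) (ξ : E → Θ × Option Θ),
        AcceptsExt C M ξ ↔
          ∀ (e : E) (x : ExtEv E), IsFirst M π e x →
            (ξ e).2 = extToOptMap (fun g => (ξ g).1) x :=
  ⟨Gossip.theCFM P A Θ π, fun _ M ξ =>
    ⟨fun hacc => Gossip.gossip_sound π M ξ hacc,
     fun h => Gossip.gossip_complete π M ξ h⟩⟩
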